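/- The multivariate exponential generating function identity Σ_{n_1,...,n_r ≥ 0} L_n^{(α)}(x) t_1^{n_1}/n_1! ··· t_r^{n_r}/n_r! = (Π_{i=1}^r (1+t_i)^{-(α_i+1)}) · exp[x(1 - Π_{i=1}^r 1/(1+t_i))] holds as formal multivariate power series, where L_n^{(α)}(x) is defined by the explicit sum Σ_{k_1,...,k_r} (-1)^{|n|-|k|} (Π_i C(n_i,k_i)(α_i+1+k_1+···+k_i)^{rising(n_i-k_i)}) x^{|k|}. -/

import Mathlib

open Finset

noncomputable def asc (y : ℝ) (b : ℕ) : ℝ := ∏ t ∈ Finset.range b, (y + t)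

lemma asc_zero (y : ℝ) : asc y 0 = 1 := by simp [asc]

lemma asc_succ (y : ℝ) (b : ℕ) : asc y (b + 1) = asc y b * (y + b) := by
  simp [asc, Finset.prod_range_succ]

lemma asc_succ' (y : ℝ) (b : ℕ) : asc y (b + 1) = y * asc (y + 1) b := by
  rw [asc, Finset.prod_range_succ']
  simp only [Nat.cast_zero, add_zero, asc]
  rw [mul_comm]
  congr 1
  apply Finset.prod_congr rfl
  intro t _
  push_cast
  ring

lemma asc_one_eq_factorial (b : ℕ) : asc 1 b = (b.factorial : ℝ) := by
  induction b with
  | zero => simp [asc_zero]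
  | succ b ih => rw [asc_succ, ih, Nat.factorial_succ]; push_cast; ring

lemma neg_prod_eq_asc (y : ℝ) (a : ℕ) :
    (∏ m ∈ Finset.range a, (-y - (m : ℝ))) = (-1) ^ a * asc y a := by
  have : ∀ m ∈ Finset.range a, (-y - (m:ℝ)) = (-1) * (y + m) := by intro m _; ring
  rw [Finset.prod_congr rfl this, Finset.prod_mul_distrib, Finset.prod_const, card_range, asc]

private lemma key_choose (c k : ℕ) (hk : k < c + 1) :
    ((c+1).choose (k+1) * (k+1).factorial : ℝ) = (c+1) * (c.choose k * k.factorial) := by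
  have e : c + 1 - (k+1) = c - k := by omega
  have h1 : (c+1).choose (k+1) * (k+1).factorial * (c - k).factorial
      = (c+1) * (c.choose k * k.factorial) * (c - k).factorial := by
    calc (c+1).choose (k+1) * (k+1).factorial * (c - k).factorial
        = (c+1).choose (k+1) * (k+1).factorial * ((c+1) - (k+1)).factorial := by rw [e]
      _ = (c+1).factorial := Nat.choose_mul_factorial_mul_factorial (by omega)
      _ = (c+1) * c.factorial := Nat.factorial_succ c
      _ = (c+1) * (c.choose k * k.factorial * (c - k).factorial) := by
          rw [Nat.choose_mul_factorial_mul_factorial (by omega : k ≤ c)]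
      _ = (c+1) * (c.choose k * k.factorial) * (c - k).factorial := by ring
  have hpos : 0 < (c - k).factorial := Nat.factorial_pos _
  have := Nat.eq_of_mul_eq_mul_right hpos h1
  exact_mod_cast congrArg (Nat.cast (R := ℝ)) this

/-- Key alternating identity (multiplied form). -/
lemma lemmaX : ∀ (p : ℕ) (y : ℝ) (c : ℕ),
    ∑ k ∈ Finset.range (c + 1),
      (-1 : ℝ) ^ k * (p.choose k) * (c.choose k) * (k.factorial) * asc (y + p) (c - k)
    = asc y c := by
  intro p
  induction p with
  | zero =>
    intro y c
    rw [Finset.sum_eq_single 0]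
    · simp [asc]
    · intro k hk hk0
      rw [Nat.choose_eq_zero_of_lt (by omega : 0 < k)]
      simp
    · intro h; simp at h
  | succ p ih =>
    intro y c
    match c with
    | 0 => simp [asc_zero, asc]
    | c + 1 =>
      have hstep : (∑ k ∈ Finset.range (c + 1 + 1),
            (-1 : ℝ) ^ k * ((p+1).choose k) * ((c+1).choose k) * (k.factorial)
              * asc (y + (p+1 : ℕ)) (c + 1 - k))
            + (c+1) * (∑ k ∈ Finset.range (c + 1),
            (-1 : ℝ) ^ k * (p.choose k) * (c.choose k) * (k.factorial)
              * asc ((y+1) + p) (c - k))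
          = (∑ k ∈ Finset.range (c + 1 + 1),
            (-1 : ℝ) ^ k * (p.choose k) * ((c+1).choose k) * (k.factorial)
              * asc ((y+1) + p) (c + 1 - k)) := by
        rw [Finset.sum_range_succ' (fun k => (-1 : ℝ) ^ k * ((p+1).choose k) * ((c+1).choose k)
              * (k.factorial) * asc (y + (p+1 : ℕ)) (c + 1 - k)),
            Finset.sum_range_succ' (fun k => (-1 : ℝ) ^ k * (p.choose k) * ((c+1).choose k)
              * (k.factorial) * asc ((y+1) + p) (c + 1 - k)),
            Finset.mul_sum]
        have hcast : (y + ((p:ℝ)+1)) = (y+1) + p := by ring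
        push_cast
        rw [hcast, add_right_comm]
        congr 1
        rw [← Finset.sum_add_distrib]
        apply Finset.sum_congr rfl
        intro k hk
        simp only [Finset.mem_range] at hk
        have hkey := key_choose c k (by omega)
        have hcs : ((p+1).choose (k+1) : ℝ) = (p.choose k : ℝ) + (p.choose (k+1) : ℝ) := by
          rw [← Nat.cast_add, ← Nat.choose_succ_succ]
        push_cast at hkey hcs ⊢
        rw [hcs]
        linear_combination ((-1:ℝ)^(k+1) * (p.choose k : ℝ) * asc (y+1+(p:ℝ)) (c-k)) * hkey
        simp
      have h1 := ih (y+1) (c+1)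
      have h2 := ih (y+1) c
      push_cast at hstep h1 h2 ⊢
      rw [h1, h2] at hstep
      have e1 := asc_succ (y+1) c
      have e2 := asc_succ' y c
      push_cast at e1 e2
      linarith [hstep, e1, e2]


lemma asc_sum_div (y : ℝ) : ∀ n : ℕ,
    ∑ b ∈ Finset.range (n+1), asc y b / (b.factorial : ℝ) = asc (y+1) n / (n.factorial : ℝ) := by
  intro n
  induction n with
  | zero => simp [asc]
  | succ n ih =>
    rw [Finset.sum_range_succ, ih, asc_succ' y n, asc_succ (y+1) n, Nat.factorial_succ]
    have h1 : ((n.factorial : ℝ)) ≠ 0 := Nat.cast_ne_zero.2 (Nat.factorial_pos n).ne'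
    have h2 : (((n+1) : ℕ) : ℝ) ≠ 0 := by positivity
    push_cast
    field_simp
    ring

lemma altsum (m : ℕ) :
    ∑ j ∈ Finset.range (m+1), (-1:ℝ)^(m+j) * (m.choose j) = if m = 0 then 1 else 0 := by
  have h := Int.alternating_sum_range_choose (n := m)
  have h' : ∑ j ∈ Finset.range (m+1), (-1:ℝ)^j * (m.choose j) = if m = 0 then 1 else 0 := by
    have := congrArg (Int.cast : ℤ → ℝ) h
    push_cast at this
    convert this using 2
  have e : ∀ j ∈ Finset.range (m+1), (-1:ℝ)^(m+j) * (m.choose j)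
      = (-1)^m * ((-1:ℝ)^j * (m.choose j)) := by
    intro j _; rw [pow_add]; ring
  rw [Finset.sum_congr rfl e, ← Finset.mul_sum, h']
  split_ifs with hm
  · subst hm; norm_num
  · simp

/-- Rising factorial Vandermonde. -/
lemma asc_add (y z : ℝ) : ∀ n : ℕ,
    asc (y + z) n = ∑ a ∈ Finset.range (n+1), (n.choose a : ℝ) * asc y a * asc z (n - a) := by
  intro n
  induction n with
  | zero => simp [asc_zero]
  | succ n ih =>
    rw [Finset.sum_range_succ' (fun a => ((n+1).choose a : ℝ) * asc y a * asc z (n + 1 - a))]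
    have step1 : ∀ a ∈ Finset.range (n+1),
        (((n+1).choose (a+1) : ℝ)) * asc y (a+1) * asc z (n + 1 - (a+1))
        = (n.choose a : ℝ) * asc y (a+1) * asc z (n - a)
          + (n.choose (a+1) : ℝ) * asc y (a+1) * asc z (n - a) := by
      intro a ha
      have : n + 1 - (a+1) = n - a := by omega
      rw [this, Nat.choose_succ_succ]
      push_cast; ring
    rw [Finset.sum_congr rfl step1, Finset.sum_add_distrib]
    -- second piece + constant term reassembles to B := Σ C(n,a) asc y a asc z (n+1-a)
    have hB : (∑ a ∈ Finset.range (n+1), (n.choose (a+1) : ℝ) * asc y (a+1) * asc z (n - a))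
        + ((n+1).choose 0 : ℝ) * asc y 0 * asc z (n + 1 - 0)
        = ∑ a ∈ Finset.range (n+1), (n.choose a : ℝ) * asc y a * asc z (n + 1 - a) := by
      rw [Finset.sum_range_succ (fun a => (n.choose (a+1) : ℝ) * asc y (a+1) * asc z (n - a)),
         Nat.choose_succ_self]
      rw [Finset.sum_range_succ' (fun a => (n.choose a : ℝ) * asc y a * asc z (n + 1 - a))]
      simp only [Nat.choose_zero_right, Nat.cast_one, asc_zero, Nat.sub_zero, Nat.cast_zero,
        zero_mul, add_zero]
      congr 1
      apply Finset.sum_congr rfl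
      intro a ha
      congr 2
      omega
    rw [add_assoc, hB]
    -- now combine the two sums termwise
    rw [← Finset.sum_add_distrib]
    have step2 : ∀ a ∈ Finset.range (n+1),
        (n.choose a : ℝ) * asc y (a+1) * asc z (n - a)
          + (n.choose a : ℝ) * asc y a * asc z (n + 1 - a)
        = ((y + z + n) * ((n.choose a : ℝ) * asc y a * asc z (n - a))) := by
      intro a ha
      simp only [Finset.mem_range] at ha
      have e1 : asc y (a+1) = asc y a * (y + a) := asc_succ y a
      have e2 : n + 1 - a = (n - a) + 1 := by omega
      have e3 := asc_succ z (n-a)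
      have e4 : ((n - a : ℕ) : ℝ) = (n : ℝ) - a := by
        have : a ≤ n := by omega
        push_cast [this]; ring
      rw [e1, e2, e3, e4]
      ring
    rw [Finset.sum_congr rfl step2, ← Finset.mul_sum, ← ih, asc_succ]
    ring


lemma trinomial_nat (n k a : ℕ) (h : k + a ≤ n) :
    n.choose k * (n-k).choose a = n.choose a * (n-a).choose k := by
  have e1 : n - k - a = n - (k+a) := by omega
  have e2 : n - a - k = n - (k+a) := by omega
  have h1 := Nat.choose_mul_factorial_mul_factorial (show k ≤ n by omega)
  have h2 := Nat.choose_mul_factorial_mul_factorial (show a ≤ n - k by omega)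
  have h3 := Nat.choose_mul_factorial_mul_factorial (show a ≤ n by omega)
  have h4 := Nat.choose_mul_factorial_mul_factorial (show k ≤ n - a by omega)
  rw [e1] at h2
  rw [e2] at h4
  apply Nat.eq_of_mul_eq_mul_right
    (show 0 < k.factorial * (a.factorial * (n-(k+a)).factorial) by positivity)
  calc n.choose k * (n-k).choose a * (k.factorial * (a.factorial * (n-(k+a)).factorial))
      = (n.choose k * k.factorial) * ((n-k).choose a * a.factorial * (n-(k+a)).factorial) := by ring
    _ = n.choose k * k.factorial * (n-k).factorial := by rw [h2]
    _ = n.factorial := h1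
    _ = n.choose a * a.factorial * (n-a).factorial := by rw [h3]
    _ = (n.choose a * a.factorial) * ((n-a).choose k * k.factorial * (n-(k+a)).factorial) := by
        rw [h4]
    _ = n.choose a * (n-a).choose k * (k.factorial * (a.factorial * (n-(k+a)).factorial)) := by ring

lemma trinomialR (n k a : ℕ) :
    (n.choose k : ℝ) * ((n-k).choose a : ℝ) = (n.choose a : ℝ) * ((n-a).choose k : ℝ) := by
  by_cases h : k + a ≤ n
  · exact_mod_cast congrArg (Nat.cast (R := ℝ)) (trinomial_nat n k a h)
  · have hL : (n.choose k) * ((n-k).choose a) = 0 := by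
      rcases le_or_gt k n with hk|hk
      · rw [Nat.choose_eq_zero_of_lt (show n - k < a by omega), mul_zero]
      · rw [Nat.choose_eq_zero_of_lt hk, zero_mul]
    have hR : (n.choose a) * ((n-a).choose k) = 0 := by
      rcases le_or_gt a n with ha|ha
      · rw [Nat.choose_eq_zero_of_lt (show n - a < k by omega), mul_zero]
      · rw [Nat.choose_eq_zero_of_lt ha, zero_mul]
    rw [← Nat.cast_mul, ← Nat.cast_mul, hL, hR]

lemma nAux (m k j : ℕ) (hk : k ≤ m) :
    (m.factorial : ℕ) * ((m-k).choose j)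
      = m.choose j * ((m-j).choose k) * k.factorial * (m-k).factorial := by
  by_cases hj : j ≤ m - k
  · have e1 : m - k - j = m - j - k := by omega
    have h1 := Nat.choose_mul_factorial_mul_factorial (show j ≤ m - k by omega)
    have h2 := Nat.choose_mul_factorial_mul_factorial (show j ≤ m by omega)
    have h3 := Nat.choose_mul_factorial_mul_factorial (show k ≤ m - j by omega)
    apply Nat.eq_of_mul_eq_mul_right
      (show 0 < j.factorial * (m-k-j).factorial by positivity)
    calc m.factorial * ((m-k).choose j) * (j.factorial * (m-k-j).factorial)
        = m.factorial * ((m-k).choose j * j.factorial * (m-k-j).factorial) := by ring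
      _ = m.factorial * (m-k).factorial := by rw [h1]
      _ = (m.choose j * j.factorial * (m-j).factorial) * (m-k).factorial := by rw [h2]
      _ = (m.choose j * j.factorial * ((m-j).choose k * k.factorial * (m-j-k).factorial))
            * (m-k).factorial := by rw [h3]
      _ = m.choose j * ((m-j).choose k) * k.factorial * (m-k).factorial
            * (j.factorial * (m-k-j).factorial) := by rw [e1]; ring
  · have hL : (m-k).choose j = 0 := Nat.choose_eq_zero_of_lt (by omega)
    have hR : m.choose j * ((m-j).choose k) = 0 := by
      rcases le_or_gt j m with hjm|hjm
      · rw [Nat.choose_eq_zero_of_lt (show m - j < k by omega), mul_zero]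
      · rw [Nat.choose_eq_zero_of_lt hjm, zero_mul]
    rw [hL, hR]
    simp

/-- Cumulative-rising-factorial sum, defined by recursion on a list. -/
noncomputable def Tsum (s : ℕ) : List ℕ → ℕ → ℝ
  | [], m => if m = 0 then 1 else 0
  | c :: cs, m => ∑ p ∈ Finset.HasAntidiagonal.antidiagonal m,
      (c.choose p.1 : ℝ) * asc (s + p.1 : ℕ) (c - p.1) * Tsum (s + p.1) cs p.2

lemma sum_ad_sum_ad (m : ℕ) (F : ℕ → ℕ → ℕ → ℝ) :
    ∑ p ∈ Finset.HasAntidiagonal.antidiagonal m, ∑ q ∈ Finset.HasAntidiagonal.antidiagonal p.2, F p.1 q.1 q.2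
    = ∑ p ∈ Finset.HasAntidiagonal.antidiagonal m, ∑ q ∈ Finset.HasAntidiagonal.antidiagonal p.2, F q.1 p.1 q.2 := by
  rw [Nat.sum_antidiagonal_eq_sum_range_succ_mk, Nat.sum_antidiagonal_eq_sum_range_succ_mk]
  have l : ∀ G : ℕ → ℕ → ℕ → ℝ, ∀ i ∈ Finset.range (m+1),
      (∑ q ∈ Finset.HasAntidiagonal.antidiagonal (m - i), G i q.1 q.2)
        = ∑ j ∈ Finset.range (m - i + 1), G i j (m - i - j) := by
    intro G i _
    rw [Nat.sum_antidiagonal_eq_sum_range_succ_mk]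
  rw [Finset.sum_congr rfl (l (fun a b c => F a b c)), Finset.sum_congr rfl (l (fun a b c => F b a c))]
  rw [Finset.sum_comm' (s' := fun j => Finset.range (m - j + 1)) (t' := Finset.range (m+1))
    (by intro i j; simp only [Finset.mem_range]; omega)]
  apply Finset.sum_congr rfl
  intro j _
  apply Finset.sum_congr rfl
  intro i hi
  congr 1
  omega

/-- Peeling the last entry of the list in `Tsum`. -/
lemma Tsum_concat (c' : ℕ) : ∀ (cs : List ℕ) (s m : ℕ),
    Tsum s (cs ++ [c']) m
      = ∑ p ∈ Finset.HasAntidiagonal.antidiagonal m,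
          (c'.choose p.1 : ℝ) * asc (s + m : ℕ) (c' - p.1) * Tsum s cs p.2 := by
  intro cs
  induction cs with
  | nil =>
    intro s m
    simp only [List.nil_append, Tsum]
    apply Finset.sum_congr rfl
    intro p hp
    simp only [Finset.HasAntidiagonal.mem_antidiagonal] at hp
    by_cases h2 : p.2 = 0
    · have : p.1 = m := by omega
      simp [this, h2]
    · simp [h2]
  | cons c cs ih =>
    intro s m
    show Tsum s (c :: (cs ++ [c'])) m = _
    simp only [Tsum]
    have step : ∀ p ∈ Finset.HasAntidiagonal.antidiagonal m,
        (c.choose p.1 : ℝ) * asc (s + p.1 : ℕ) (c - p.1) * Tsum (s + p.1) (cs ++ [c']) p.2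
        = ∑ q ∈ Finset.HasAntidiagonal.antidiagonal p.2,
            (c.choose p.1 : ℝ) * asc (s + p.1 : ℕ) (c - p.1) *
              ((c'.choose q.1 : ℝ) * asc (s + m : ℕ) (c' - q.1) * Tsum (s + p.1) cs q.2) := by
      intro p hp
      simp only [Finset.HasAntidiagonal.mem_antidiagonal] at hp
      rw [ih (s + p.1) p.2, Finset.mul_sum]
      apply Finset.sum_congr rfl
      intro q hq
      simp only [Finset.HasAntidiagonal.mem_antidiagonal] at hq
      have : s + p.1 + p.2 = s + m := by omega
      rw [this]
    rw [Finset.sum_congr rfl step]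
    have swap := sum_ad_sum_ad m (fun u v w =>
      (c.choose u : ℝ) * asc (s + u : ℕ) (c - u) *
        ((c'.choose v : ℝ) * asc (s + m : ℕ) (c' - v) * Tsum (s + u) cs w))
    rw [swap]
    apply Finset.sum_congr rfl
    intro p hp
    rw [Finset.mul_sum]
    apply Finset.sum_congr rfl
    intro q hq
    ring

lemma Tsum_closed (cs : List ℕ) : ∀ (s m : ℕ),
    (m.factorial : ℝ) * Tsum s cs m
    = ∑ j ∈ Finset.range (m+1), (-1:ℝ)^(m+j) * (m.choose j)
        * ((cs.map (fun c => asc ((s+j : ℕ) : ℝ) c)).prod) := by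
  induction cs using List.reverseRecOn with
  | nil =>
    intro s m
    simp only [Tsum, List.map_nil, List.prod_nil, mul_one]
    rw [altsum]
    split_ifs with h
    · subst h; simp
    · simp
  | append_singleton cs c' IH =>
    intro s m
    rw [Tsum_concat, Nat.sum_antidiagonal_eq_sum_range_succ_mk, Finset.mul_sum]
    have hsign : ∀ j k : ℕ, k ≤ m → (-1:ℝ)^(m-k+j) = (-1:ℝ)^(m+j+k) := by
      intro j k hk
      rw [show m+j+k = (m-k+j) + 2*k by omega]
      conv_rhs => rw [pow_add, pow_mul]
      norm_num
    have key : ∀ k ∈ Finset.range (m+1), (m.factorial : ℝ) * Tsum s cs (m-k)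
        = ∑ j ∈ Finset.range (m+1),
            (-1:ℝ)^(m+j+k) * (m.choose j) * (((m-j).choose k) : ℝ) * (k.factorial : ℝ)
              * ((cs.map (fun c => asc ((s+j : ℕ) : ℝ) c)).prod) := by
      intro k hk
      simp only [Finset.mem_range] at hk
      have hne : ((m-k).factorial : ℝ) ≠ 0 := Nat.cast_ne_zero.2 (Nat.factorial_pos _).ne'
      apply mul_left_cancel₀ hne
      calc ((m-k).factorial : ℝ) * ((m.factorial : ℝ) * Tsum s cs (m-k))
          = (m.factorial : ℝ) * (((m-k).factorial : ℝ) * Tsum s cs (m-k)) := by ring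
        _ = (m.factorial : ℝ) * ∑ j ∈ Finset.range (m-k+1),
              (-1:ℝ)^(m-k+j) * ((m-k).choose j)
                * ((cs.map (fun c => asc ((s+j : ℕ) : ℝ) c)).prod) := by rw [IH s (m-k)]
        _ = ∑ j ∈ Finset.range (m-k+1), (m.factorial : ℝ) * ((-1:ℝ)^(m-k+j) * ((m-k).choose j)
                * ((cs.map (fun c => asc ((s+j : ℕ) : ℝ) c)).prod)) := Finset.mul_sum _ _ _
        _ = ∑ j ∈ Finset.range (m+1), (m.factorial : ℝ) * ((-1:ℝ)^(m-k+j) * ((m-k).choose j)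
                * ((cs.map (fun c => asc ((s+j : ℕ) : ℝ) c)).prod)) := by
            apply Finset.sum_subset (Finset.range_subset_range.2 (by omega : m-k+1 ≤ m+1))
            intro j hj hj'
            simp only [Finset.mem_range] at hj hj'
            rw [Nat.choose_eq_zero_of_lt (show m - k < j by omega)]
            simp
        _ = ((m-k).factorial : ℝ) * ∑ j ∈ Finset.range (m+1),
              (-1:ℝ)^(m+j+k) * (m.choose j) * (((m-j).choose k) : ℝ) * (k.factorial : ℝ)
                * ((cs.map (fun c => asc ((s+j : ℕ) : ℝ) c)).prod) := by
            rw [Finset.mul_sum]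
            apply Finset.sum_congr rfl
            intro j hj
            have hn := nAux m k j (by omega)
            have hn' : (m.factorial : ℝ) * (((m-k).choose j) : ℝ)
                = (m.choose j : ℝ) * (((m-j).choose k) : ℝ) * (k.factorial : ℝ)
                  * ((m-k).factorial : ℝ) := by exact_mod_cast congrArg (Nat.cast (R := ℝ)) hn
            rw [← hsign j k (by omega)]
            linear_combination ((-1:ℝ)^(m-k+j)
              * ((cs.map (fun c => asc ((s+j : ℕ) : ℝ) c)).prod)) * hn'
    have hper : ∀ k ∈ Finset.range (m+1),
        (m.factorial : ℝ) * ((c'.choose k : ℝ) * asc ((s + m : ℕ) : ℝ) (c' - k) * Tsum s cs (m - k))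
        = ∑ j ∈ Finset.range (m+1),
            ((-1:ℝ)^(m+j) * (m.choose j) * ((cs.map (fun c => asc ((s+j : ℕ) : ℝ) c)).prod))
            * ((-1:ℝ)^k * (((m-j).choose k) : ℝ) * ((c'.choose k : ℝ)) * (k.factorial : ℝ)
                * asc ((s + m : ℕ):ℝ) (c' - k)) := by
      intro k hk
      have e : (m.factorial : ℝ) * ((c'.choose k : ℝ) * asc ((s + m : ℕ) : ℝ) (c' - k) * Tsum s cs (m - k))
          = ((c'.choose k : ℝ) * asc ((s + m : ℕ) : ℝ) (c' - k)) * ((m.factorial : ℝ) * Tsum s cs (m-k)) := by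
        ring
      rw [e, key k hk, Finset.mul_sum]
      apply Finset.sum_congr rfl
      intro j hj
      rw [show m+j+k = (m+j)+k by omega, pow_add]
      ring
    rw [Finset.sum_congr rfl hper, Finset.sum_comm]
    apply Finset.sum_congr rfl
    intro j hj
    simp only [Finset.mem_range] at hj
    rw [← Finset.mul_sum]
    have hinner : ∑ k ∈ Finset.range (m+1),
        ((-1:ℝ)^k * (((m-j).choose k) : ℝ) * ((c'.choose k : ℝ)) * (k.factorial : ℝ)
          * asc ((s + m : ℕ):ℝ) (c' - k)) = asc ((s+j : ℕ) : ℝ) c' := by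
      have hX := lemmaX (m-j) ((s+j : ℕ) : ℝ) c'
      have hcast : ((s+j : ℕ) : ℝ) + ((m-j : ℕ) : ℝ) = ((s + m : ℕ) : ℝ) := by
        rw [← Nat.cast_add, show (s+j) + (m-j) = s + m by omega]
      rw [hcast] at hX
      rw [← hX]
      have h1 : ∑ k ∈ Finset.range (c'+1),
          (-1:ℝ)^k * (((m-j).choose k) : ℝ) * ((c'.choose k : ℝ)) * (k.factorial : ℝ)
            * asc ((s + m : ℕ):ℝ) (c' - k)
          = ∑ k ∈ Finset.range (m+c'+1),
          (-1:ℝ)^k * (((m-j).choose k) : ℝ) * ((c'.choose k : ℝ)) * (k.factorial : ℝ)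
            * asc ((s + m : ℕ):ℝ) (c' - k) := by
        apply Finset.sum_subset (Finset.range_subset_range.2 (by omega))
        intro k hk hk'
        simp only [Finset.mem_range] at hk hk'
        rw [Nat.choose_eq_zero_of_lt (show c' < k by omega)]
        simp
      have h2 : ∑ k ∈ Finset.range (m+1),
          (-1:ℝ)^k * (((m-j).choose k) : ℝ) * ((c'.choose k : ℝ)) * (k.factorial : ℝ)
            * asc ((s + m : ℕ):ℝ) (c' - k)
          = ∑ k ∈ Finset.range (m+c'+1),
          (-1:ℝ)^k * (((m-j).choose k) : ℝ) * ((c'.choose k : ℝ)) * (k.factorial : ℝ)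
            * asc ((s + m : ℕ):ℝ) (c' - k) := by
        apply Finset.sum_subset (Finset.range_subset_range.2 (by omega))
        intro k hk hk'
        simp only [Finset.mem_range] at hk hk'
        rw [Nat.choose_eq_zero_of_lt (show m - j < k by omega)]
        simp
      rw [h2, ← h1]
    rw [hinner]
    simp only [List.map_append, List.prod_append, List.map_cons, List.map_nil,
      List.prod_cons, List.prod_nil, mul_one]
    ring

lemma sum_piFinset_succ {r : ℕ} (t : Fin (r+1) → ℕ) (F : (Fin (r+1) → ℕ) → ℝ) :
    ∑ k ∈ Fintype.piFinset (fun i => Finset.range (t i)), F k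
    = ∑ p ∈ (Finset.range (t 0)) ×ˢ (Fintype.piFinset (fun i : Fin r => Finset.range (t i.succ))),
        F (Fin.cons p.1 p.2) := by
  apply Finset.sum_nbij' (i := fun k => ((k 0, fun i => k i.succ) : ℕ × (Fin r → ℕ)))
    (j := fun p => Fin.cons p.1 p.2)
  · intro k hk
    simp only [Fintype.mem_piFinset] at hk
    simp only [Finset.mem_product, Fintype.mem_piFinset]
    exact ⟨hk 0, fun i => hk i.succ⟩
  · intro p hp
    simp only [Finset.mem_product, Fintype.mem_piFinset] at hp
    simp only [Fintype.mem_piFinset]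
    intro i
    induction i using Fin.cases with
    | zero => simpa using hp.1
    | succ i => simpa using hp.2 i
  · intro k hk
    exact Fin.cons_self_tail k
  · intro p hp
    simp [Fin.tail]
  · intro k hk
    exact congrArg F (Fin.cons_self_tail k).symm

lemma cumsum_cons_zero {r : ℕ} (k0 : ℕ) (k' : Fin r → ℕ) :
    (∑ j' ∈ Finset.univ.filter (fun j' => j' ≤ (0 : Fin (r+1))),
      (Fin.cons k0 k' : Fin (r+1) → ℕ) j') = k0 := by
  rw [Finset.sum_filter, Fin.sum_univ_succ]
  have h0 : ∀ j : Fin r, ¬ (j.succ ≤ (0 : Fin (r+1))) := by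
    intro j h
    exact Fin.succ_ne_zero j (Fin.le_zero_iff.1 h)
  simp [h0]

lemma cumsum_cons_succ {r : ℕ} (k0 : ℕ) (k' : Fin r → ℕ) (i : Fin r) :
    (∑ j' ∈ Finset.univ.filter (fun j' => j' ≤ i.succ),
      (Fin.cons k0 k' : Fin (r+1) → ℕ) j')
    = k0 + ∑ j' ∈ Finset.univ.filter (fun j' => j' ≤ i), k' j' := by
  rw [Finset.sum_filter, Fin.sum_univ_succ, Finset.sum_filter]
  have h0 : (0 : Fin (r+1)) ≤ i.succ := Fin.zero_le _
  simp only [h0, if_true, Fin.cons_zero, Fin.cons_succ, Fin.succ_le_succ_iff]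

lemma bridge : ∀ (r : ℕ) (c : Fin r → ℕ) (s m : ℕ),
    (∑ k ∈ Fintype.piFinset (fun i => Finset.range (c i + 1)),
      if (∑ i, k i) = m
      then ∏ i, (((c i).choose (k i) : ℝ) *
             asc ((s + ∑ j' ∈ Finset.univ.filter (fun j' => j' ≤ i), k j' : ℕ) : ℝ) (c i - k i))
      else 0)
    = Tsum s (List.ofFn c) m := by
  intro r
  induction r with
  | zero =>
    intro c s m
    rw [show (List.ofFn c) = [] from by simp]
    simp only [Tsum]
    rw [show (Fintype.piFinset (fun i : Fin 0 => Finset.range (c i + 1)))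
        = {(fun i => 0 : Fin 0 → ℕ)} from by
      ext f
      simp only [Fintype.mem_piFinset, Finset.mem_singleton]
      constructor
      · intro _; exact Subsingleton.elim _ _
      · intro _ i; exact i.elim0]
    simp [eq_comm]
  | succ r IH =>
    intro c s m
    rw [sum_piFinset_succ, Finset.sum_product,
      show List.ofFn c = c 0 :: List.ofFn (fun i : Fin r => c i.succ) from by
        simp [List.ofFn_succ]]
    simp only [Tsum]
    rw [Nat.sum_antidiagonal_eq_sum_range_succ_mk]
    have inner : ∀ k0 ∈ Finset.range (c 0 + 1),
        (∑ k' ∈ Fintype.piFinset (fun i : Fin r => Finset.range (c i.succ + 1)),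
          if (∑ i, (Fin.cons k0 k' : Fin (r+1) → ℕ) i) = m
          then ∏ i, (((c i).choose ((Fin.cons k0 k' : Fin (r+1) → ℕ) i) : ℝ) *
             asc ((s + ∑ j' ∈ Finset.univ.filter (fun j' => j' ≤ i),
                    (Fin.cons k0 k' : Fin (r+1) → ℕ) j' : ℕ) : ℝ)
               (c i - (Fin.cons k0 k' : Fin (r+1) → ℕ) i))
          else 0)
        = if k0 ≤ m
          then ((c 0).choose k0 : ℝ) * asc ((s + k0 : ℕ):ℝ) (c 0 - k0)
                * Tsum (s+k0) (List.ofFn (fun i : Fin r => c i.succ)) (m - k0)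
          else 0 := by
      intro k0 hk0mem
      by_cases hk0 : k0 ≤ m
      · rw [if_pos hk0, ← IH (fun i => c i.succ) (s+k0) (m-k0), Finset.mul_sum]
        apply Finset.sum_congr rfl
        intro k' hk'
        rw [Fin.sum_cons]
        by_cases hcond : (∑ i, k' i) = m - k0
        · rw [if_pos (by omega), if_pos hcond, Fin.prod_univ_succ]
          congr 1
          · rw [show (Fin.cons k0 k' : Fin (r+1) → ℕ) 0 = k0 from Fin.cons_zero _ _,
              cumsum_cons_zero]
          · apply Finset.prod_congr rfl
            intro i _
            rw [show (Fin.cons k0 k' : Fin (r+1) → ℕ) i.succ = k' i from Fin.cons_succ _ _ _,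
              cumsum_cons_succ,
              show s + (k0 + (∑ j' ∈ Finset.univ.filter (fun j' => j' ≤ i), k' j'))
                = s + k0 + (∑ j' ∈ Finset.univ.filter (fun j' => j' ≤ i), k' j') from by omega]
        · rw [if_neg (by omega), if_neg hcond, mul_zero]
      · rw [if_neg hk0]
        apply Finset.sum_eq_zero
        intro k' _
        rw [Fin.sum_cons, if_neg (by omega)]
    have hL : ∑ k0 ∈ Finset.range (c 0 + 1),
        (if k0 ≤ m
          then ((c 0).choose k0 : ℝ) * asc ((s + k0 : ℕ):ℝ) (c 0 - k0)
                * Tsum (s+k0) (List.ofFn (fun i : Fin r => c i.succ)) (m - k0)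
          else 0)
        = ∑ k0 ∈ Finset.range (c 0 + m + 1),
        (if k0 ≤ m
          then ((c 0).choose k0 : ℝ) * asc ((s + k0 : ℕ):ℝ) (c 0 - k0)
                * Tsum (s+k0) (List.ofFn (fun i : Fin r => c i.succ)) (m - k0)
          else 0) := by
      apply Finset.sum_subset (Finset.range_subset_range.2 (by omega))
      intro k hk hk'
      simp only [Finset.mem_range] at hk hk'
      rw [Nat.choose_eq_zero_of_lt (show c 0 < k by omega)]
      simp
    rw [Finset.sum_congr rfl inner, hL]
    simp only [Nat.succ_eq_add_one]
    have hR1 : ∀ k ∈ Finset.range (m+1),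
        ((c 0).choose (k, m-k).1 : ℝ) * asc ((s + (k, m-k).1 : ℕ):ℝ) (c 0 - (k, m-k).1)
          * Tsum (s + (k, m-k).1) (List.ofFn fun i : Fin r => c i.succ) (k, m-k).2
        = if k ≤ m then ((c 0).choose k : ℝ) * asc ((s + k : ℕ):ℝ) (c 0 - k)
            * Tsum (s+k) (List.ofFn fun i : Fin r => c i.succ) (m - k) else 0 := by
      intro k hk
      simp only [Finset.mem_range] at hk
      rw [if_pos (by omega : k ≤ m)]
    rw [Finset.sum_congr rfl hR1]
    exact (Finset.sum_subset (Finset.range_subset_range.2 (by omega))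
      (fun k hk hk' => by
        simp only [Finset.mem_range] at hk hk'
        rw [if_neg (by omega)])).symm


noncomputable def mk1 (r : ℕ) (i : Fin r) (f : ℕ → ℝ) : MvPowerSeries (Fin r) ℝ :=
  fun d => if ∀ j, j ≠ i → d j = 0 then f (d i) else 0

lemma coeff_mk1 {r : ℕ} (i : Fin r) (f : ℕ → ℝ) (d : Fin r →₀ ℕ) :
    MvPowerSeries.coeff d (mk1 r i f)
      = if ∀ j, j ≠ i → d j = 0 then f (d i) else 0 := rfl

lemma mk1_mul_mk1 {r : ℕ} (i : Fin r) (f g : ℕ → ℝ) :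
    mk1 r i f * mk1 r i g
      = mk1 r i (fun n => ∑ p ∈ Finset.HasAntidiagonal.antidiagonal n, f p.1 * g p.2) := by
  ext d
  rw [MvPowerSeries.coeff_mul, coeff_mk1]
  by_cases h : ∀ j, j ≠ i → d j = 0
  · rw [if_pos h]
    have hterm : ∀ p ∈ Finset.HasAntidiagonal.antidiagonal d,
        MvPowerSeries.coeff p.1 (mk1 r i f) * MvPowerSeries.coeff p.2 (mk1 r i g)
          = f (p.1 i) * g (p.2 i) := by
      intro p hp
      rw [Finset.HasAntidiagonal.mem_antidiagonal] at hp
      have h1 : ∀ j, j ≠ i → p.1 j = 0 := by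
        intro j hj
        have := congrArg (fun v : Fin r →₀ ℕ => v j) hp
        simp only [Finsupp.add_apply] at this
        have := h j hj
        omega
      have h2 : ∀ j, j ≠ i → p.2 j = 0 := by
        intro j hj
        have := congrArg (fun v : Fin r →₀ ℕ => v j) hp
        simp only [Finsupp.add_apply] at this
        have := h j hj
        omega
      rw [coeff_mk1, coeff_mk1, if_pos h1, if_pos h2]
    rw [Finset.sum_congr rfl hterm]
    apply Finset.sum_nbij' (i := fun p => ((p.1 i, p.2 i) : ℕ × ℕ))
      (j := fun q => ((Finsupp.single i q.1, Finsupp.single i q.2) : (Fin r →₀ ℕ) × (Fin r →₀ ℕ)))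
    · intro p hp
      rw [Finset.HasAntidiagonal.mem_antidiagonal] at hp
      rw [Finset.HasAntidiagonal.mem_antidiagonal, ← Finsupp.add_apply, hp]
    · intro q hq
      rw [Finset.HasAntidiagonal.mem_antidiagonal] at hq
      rw [Finset.HasAntidiagonal.mem_antidiagonal]
      ext j
      by_cases hj : j = i
      · subst hj
        simp [hq]
      · simp [Finsupp.single_apply, Ne.symm hj, h j hj]
    · intro p hp
      rw [Finset.HasAntidiagonal.mem_antidiagonal] at hp
      have h1 : ∀ j, j ≠ i → p.1 j = 0 := by
        intro j hj
        have := congrArg (fun v : Fin r →₀ ℕ => v j) hp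
        simp only [Finsupp.add_apply] at this
        have := h j hj
        omega
      have h2 : ∀ j, j ≠ i → p.2 j = 0 := by
        intro j hj
        have := congrArg (fun v : Fin r →₀ ℕ => v j) hp
        simp only [Finsupp.add_apply] at this
        have := h j hj
        omega
      have e1 : Finsupp.single i (p.1 i) = p.1 := by
        ext j
        by_cases hj : j = i
        · subst hj; simp
        · simp [Finsupp.single_apply, Ne.symm hj, h1 j hj]
      have e2 : Finsupp.single i (p.2 i) = p.2 := by
        ext j
        by_cases hj : j = i
        · subst hj; simp
        · simp [Finsupp.single_apply, Ne.symm hj, h2 j hj]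
      simp [e1, e2]
    · intro q hq
      simp
    · intro p hp
      simp
  · rw [if_neg h]
    push_neg at h
    obtain ⟨j, hj, hdj⟩ := h
    apply Finset.sum_eq_zero
    intro p hp
    rw [Finset.HasAntidiagonal.mem_antidiagonal] at hp
    have hsum : p.1 j + p.2 j = d j := by
      have := congrArg (fun v : Fin r →₀ ℕ => v j) hp
      simpa using this
    rcases Nat.eq_zero_or_pos (p.1 j) with h1 | h1
    · have h2 : p.2 j ≠ 0 := by omega
      rw [coeff_mk1 (f := g), if_neg (by push_neg; exact ⟨j, hj, h2⟩), mul_zero]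
    · rw [coeff_mk1 (f := f), if_neg (by push_neg; exact ⟨j, hj, by omega⟩), zero_mul]

lemma one_eq_mk1 {r : ℕ} (i : Fin r) :
    (1 : MvPowerSeries (Fin r) ℝ) = mk1 r i (fun a => if a = 0 then 1 else 0) := by
  ext d
  classical
  rw [MvPowerSeries.coeff_one, coeff_mk1]
  by_cases h : ∀ j, j ≠ i → d j = 0
  · rw [if_pos h]
    by_cases hd : d = 0
    · subst hd; simp
    · have hdi : d i ≠ 0 := by
        intro hdi
        apply hd
        ext j
        by_cases hj : j = i
        · subst hj; simpa using hdi
        · simpa using h j hj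
      rw [if_neg hd, if_neg hdi]
  · rw [if_neg h]
    push_neg at h
    obtain ⟨j, hj, hdj⟩ := h
    rw [if_neg (by intro hd0; subst hd0; simp at hdj)]

lemma mk1_congr {r : ℕ} {i : Fin r} {f g : ℕ → ℝ} (h : ∀ a, f a = g a) :
    mk1 r i f = mk1 r i g := by
  funext d
  simp only [mk1]
  rw [h]

lemma inv_one_add_X {r : ℕ} (i : Fin r) :
    (1 + MvPowerSeries.X i : MvPowerSeries (Fin r) ℝ)⁻¹
      = mk1 r i (fun a => (-1 : ℝ)^a) := by
  have hc : MvPowerSeries.constantCoeff (1 + MvPowerSeries.X i : MvPowerSeries (Fin r) ℝ) ≠ 0 := by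
    rw [map_add, map_one, MvPowerSeries.constantCoeff_X]
    norm_num
  rw [MvPowerSeries.inv_eq_iff_mul_eq_one hc]
  ext d
  rw [mul_add, mul_one, map_add, MvPowerSeries.X_def, MvPowerSeries.coeff_mul_monomial,
    MvPowerSeries.coeff_one, coeff_mk1]
  by_cases h : ∀ j, j ≠ i → d j = 0
  · rw [if_pos h]
    by_cases hd : d = 0
    · subst hd
      rw [if_neg (by
          intro hle
          have h1 := hle i
          simp at h1), if_pos rfl]
      simp
    · have hdi : 1 ≤ d i := by
        rcases Nat.eq_zero_or_pos (d i) with h0 | h0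
        · exfalso; apply hd; ext j
          by_cases hj : j = i
          · subst hj; simpa using h0
          · simpa using h j hj
        · omega
      have hle : Finsupp.single i 1 ≤ d := by
        rw [Finsupp.single_le_iff]
        exact hdi
      rw [if_pos hle, if_neg hd, coeff_mk1, if_pos (by
          intro j hj
          rw [Finsupp.tsub_apply]
          simp [Finsupp.single_apply, Ne.symm hj, h j hj])]
      have hsub : ((d - Finsupp.single i 1 : Fin r →₀ ℕ)) i = d i - 1 := by
        rw [Finsupp.tsub_apply]; simp
      rw [hsub]
      have hpow : (-1:ℝ)^(d i) = -(-1:ℝ)^(d i - 1) := by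
        conv_lhs => rw [show d i = (d i - 1) + 1 from by omega]
        rw [pow_succ]
        ring
      rw [hpow]
      ring
  · rw [if_neg h]
    push_neg at h
    obtain ⟨j, hj, hdj⟩ := h
    have hd : d ≠ 0 := by intro h0; subst h0; simp at hdj
    rw [if_neg hd]
    by_cases hle : Finsupp.single i 1 ≤ d
    · rw [if_pos hle, coeff_mk1, if_neg (by
        push_neg
        refine ⟨j, hj, ?_⟩
        rw [Finsupp.tsub_apply]
        simp [Finsupp.single_apply, Ne.symm hj]
        omega)]
      simp
    · rw [if_neg hle]
      simp

lemma asc_zero_left (a : ℕ) (ha : a ≠ 0) : asc 0 a = 0 := by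
  obtain ⟨b, rfl⟩ := Nat.exists_eq_succ_of_ne_zero ha
  rw [asc_succ', zero_mul]

lemma u_pow {r : ℕ} (i : Fin r) : ∀ j : ℕ,
    (mk1 r i (fun a => (-1:ℝ)^a)) ^ j
      = mk1 r i (fun a => (-1:ℝ)^a * asc (j : ℝ) a / (a.factorial : ℝ)) := by
  intro j
  induction j with
  | zero =>
    rw [pow_zero, one_eq_mk1 i]
    apply mk1_congr
    intro a
    by_cases ha : a = 0
    · subst ha; simp [asc]
    · rw [if_neg ha, Nat.cast_zero, asc_zero_left a ha]
      simp
  | succ j ih =>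
    rw [pow_succ, ih, mk1_mul_mk1]
    apply mk1_congr
    intro n
    have hterm : ∀ p ∈ Finset.HasAntidiagonal.antidiagonal n,
        ((-1:ℝ)^p.1 * asc (j : ℝ) p.1 / (p.1.factorial : ℝ)) * (-1:ℝ)^p.2
          = (-1:ℝ)^n * (asc (j : ℝ) p.1 / (p.1.factorial : ℝ)) := by
      intro p hp
      rw [Finset.HasAntidiagonal.mem_antidiagonal] at hp
      rw [← hp, pow_add]
      ring
    rw [Finset.sum_congr rfl hterm, ← Finset.mul_sum,
      Nat.sum_antidiagonal_eq_sum_range_succ_mk]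
    simp only []
    rw [asc_sum_div (j : ℝ) n]
    push_cast
    ring

lemma coeff_prod_mk1 {r : ℕ} (F : Fin r → (ℕ → ℝ)) (d : Fin r →₀ ℕ) :
    MvPowerSeries.coeff d (∏ i, mk1 r i (F i)) = ∏ i, F i (d i) := by
  classical
  rw [MvPowerSeries.coeff_prod]
  have hsum : ∀ j : Fin r, (∑ i, Finsupp.single i (d i)) j = d j := by
    intro j
    rw [Finsupp.finset_sum_apply]
    rw [Finset.sum_eq_single j]
    · simp
    · intro i _ hij; simp [Finsupp.single_apply, hij]
    · intro h; simp at h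
  set l0 : Fin r →₀ (Fin r →₀ ℕ) :=
    Finsupp.equivFunOnFinite.symm (fun i => Finsupp.single i (d i)) with hl0
  have hl0app : ∀ i, l0 i = Finsupp.single i (d i) := by
    intro i; rw [hl0]; rfl
  rw [Finset.sum_eq_single l0]
  · apply Finset.prod_congr rfl
    intro i _
    rw [hl0app, coeff_mk1, if_pos (by
      intro j hj; simp [Finsupp.single_apply, Ne.symm hj])]
    simp
  · intro l hl hlne
    rw [Finset.mem_finsuppAntidiag] at hl
    by_contra hne0
    have hfac := Finset.prod_ne_zero_iff.1 hne0
    have hsv : ∀ i : Fin r, ∀ j, j ≠ i → l i j = 0 := by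
      intro i j hj
      have := hfac i (Finset.mem_univ i)
      rw [coeff_mk1] at this
      by_contra hne
      exact this (if_neg (by push_neg; exact ⟨j, hj, hne⟩))
    apply hlne
    have hdi : ∀ i : Fin r, l i i = d i := by
      intro i
      have hs := congrArg (fun v : Fin r →₀ ℕ => v i) hl.1
      rw [← hs, Finsupp.finset_sum_apply, Finset.sum_eq_single i]
      · intro b _ hbi; exact hsv b i (Ne.symm hbi)
      · intro h; simp at h
    ext i j
    rw [hl0app]
    by_cases hj : j = i
    · subst hj; simp [hdi]
    · rw [hsv i j hj]
      simp [Finsupp.single_apply, Ne.symm hj]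
  · intro hnot
    exfalso
    apply hnot
    rw [Finset.mem_finsuppAntidiag]
    constructor
    · ext j
      rw [show Finset.univ.sum ⇑l0 = ∑ i, Finsupp.single i (d i) from
        Finset.sum_congr rfl (fun i _ => hl0app i)] at *
      exact hsum j
    · intro x _; exact Finset.mem_univ x

lemma coeff_pow_zero_of_lt {r : ℕ} {φ : MvPowerSeries (Fin r) ℝ}
    (h0 : MvPowerSeries.constantCoeff φ = 0) :
    ∀ m (d : Fin r →₀ ℕ), (d.sum fun _ e => e) < m → MvPowerSeries.coeff d (φ ^ m) = 0 := by
  intro m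
  induction m with
  | zero => intro d hd; omega
  | succ m ih =>
    intro d hd
    rw [pow_succ, MvPowerSeries.coeff_mul]
    apply Finset.sum_eq_zero
    intro p hp
    rw [Finset.HasAntidiagonal.mem_antidiagonal] at hp
    by_cases h2 : p.2 = 0
    · rw [h2, show MvPowerSeries.coeff 0 φ = MvPowerSeries.constantCoeff φ from rfl,
        h0, mul_zero]
    · have hsplit : (d.sum fun _ e => e) = (p.1.sum fun _ e => e) + (p.2.sum fun _ e => e) := by
        rw [← hp, Finsupp.sum_add_index']
        · intro a; rfl
        · intro a b1 b2; rfl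
      have hpos : 0 < (p.2.sum fun _ e => e) := by
        rcases Finsupp.ne_iff.1 h2 with ⟨a, ha⟩
        simp only [Finsupp.coe_zero, Pi.zero_apply] at ha
        have hmem : a ∈ p.2.support := Finsupp.mem_support_iff.2 ha
        calc 0 < p.2 a := Nat.pos_of_ne_zero ha
          _ ≤ _ := Finset.single_le_sum (f := fun a => p.2 a) (by intro b _; omega) hmem
      rw [ih p.1 (by omega), zero_mul]


lemma sum_ad_finsupp {r : ℕ} (d : Fin r →₀ ℕ) (G : (Fin r → ℕ) → (Fin r → ℕ) → ℝ) :
    ∑ p ∈ Finset.HasAntidiagonal.antidiagonal d, G (fun i => p.1 i) (fun i => p.2 i)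
    = ∑ a ∈ Fintype.piFinset (fun i => Finset.range (d i + 1)),
        G a (fun i => d i - a i) := by
  classical
  apply Finset.sum_nbij' (i := fun p => (fun i => p.1 i : Fin r → ℕ))
    (j := fun a => ((Finsupp.equivFunOnFinite.symm a,
        d - Finsupp.equivFunOnFinite.symm a) : (Fin r →₀ ℕ) × (Fin r →₀ ℕ)))
  · intro p hp
    rw [Finset.HasAntidiagonal.mem_antidiagonal] at hp
    simp only [Fintype.mem_piFinset, Finset.mem_range]
    intro i
    have := congrArg (fun v : Fin r →₀ ℕ => v i) hp
    simp only [Finsupp.add_apply] at this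
    omega
  · intro a ha
    rw [Finset.HasAntidiagonal.mem_antidiagonal]
    simp only [Fintype.mem_piFinset, Finset.mem_range] at ha
    ext j
    simp only [Finsupp.add_apply, Finsupp.tsub_apply]
    have : (Finsupp.equivFunOnFinite.symm a) j = a j := rfl
    rw [this]
    have := ha j
    omega
  · intro p hp
    rw [Finset.HasAntidiagonal.mem_antidiagonal] at hp
    have h1 : Finsupp.equivFunOnFinite.symm (fun i => p.1 i : Fin r → ℕ) = p.1 := by
      ext j; rfl
    rw [h1]
    have h2 : d - p.1 = p.2 := by
      ext j
      have := congrArg (fun v : Fin r →₀ ℕ => v j) hp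
      simp only [Finsupp.add_apply] at this
      rw [Finsupp.tsub_apply]
      omega
    rw [h2]
  · intro a ha
    funext i
    rfl
  · intro p hp
    rw [Finset.HasAntidiagonal.mem_antidiagonal] at hp
    congr 1
    funext i
    simp only [Finsupp.tsub_apply]
    have := congrArg (fun v : Fin r →₀ ℕ => v i) hp
    simp only [Finsupp.add_apply] at this
    omega


/-- The value at `x` of the multiple Laguerre polynomial
`L_n^{(α)}(x) = Σ_k (-1)^{|n|-|k|} (Π_i C(n_i,k_i)(α_i+1+k_1+···+k_i)^{rising(n_i-k_i)}) x^{|k|}`. -/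
noncomputable def multipleLaguerreVal (r : ℕ) (α : Fin r → ℝ) (n : Fin r → ℕ) (x : ℝ) : ℝ :=
  ∑ k ∈ Fintype.piFinset (fun i => Finset.range (n i + 1)),
    (-1 : ℝ) ^ ((∑ i, n i) - (∑ i, k i)) *
      (∏ i, (((n i).choose (k i) : ℝ) *
        ∏ j ∈ Finset.range (n i - k i),
          (α i + 1 + (∑ j' ∈ Finset.univ.filter (fun j' => j' ≤ i), (k j' : ℝ)) + (j : ℝ)))) *
      x ^ (∑ i, k i)

/-- The binomial series `(1+t_i)^c` in the single variable `t_i`, as a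
multivariate formal power series. -/
noncomputable def binomialSeriesMv (r : ℕ) (c : ℝ) (i : Fin r) : MvPowerSeries (Fin r) ℝ :=
  fun d => if ∀ j, j ≠ i → d j = 0
    then (∏ m ∈ Finset.range (d i), (c - (m : ℝ))) / ((d i).factorial : ℝ)
    else 0

/-- The exponential `exp g = Σ_m g^m/m!` of a multivariate formal power series
`g` (with zero constant term); the coefficient on a monomial `d` only involves
`g^m` for `m` at most the total degree of `d`. -/
noncomputable def expMv (r : ℕ) (g : MvPowerSeries (Fin r) ℝ) : MvPowerSeries (Fin r) ℝ :=
  fun d => MvPowerSeries.coeff d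
    (∑ m ∈ Finset.range ((d.sum fun _ e => e) + 1), ((m.factorial : ℝ)⁻¹) • g ^ m)

/-- the multivariate exponential generating function identity
`Σ_{n_1,...,n_r ≥ 0} L_n^{(α)}(x) t_1^{n_1}/n_1! ··· t_r^{n_r}/n_r!
  = (Π_i (1+t_i)^{-(α_i+1)}) · exp[x (1 - Π_i 1/(1+t_i))]`
as formal power series in `t_1, ..., t_r`. -/
lemma neg_one_pow_nat_sub (a b : ℕ) (h : b ≤ a) : (-1:ℝ)^(a-b) = (-1)^(a+b) := by
  rw [show a + b = (a-b) + 2*b by omega]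
  conv_rhs => rw [pow_add, pow_mul]
  norm_num


noncomputable def EXPR (r : ℕ) (α : Fin r → ℝ) (x : ℝ) (d : Fin r → ℕ) (N : ℕ)
    (a : Fin r → ℕ) (m j : ℕ) : ℝ :=
  (-1:ℝ)^(N+j) * x^m * ((m.factorial : ℝ))⁻¹ * (m.choose j) *
  ∏ i, (asc (α i + 1) (a i) * asc (j:ℝ) (d i - a i)
        / (((a i).factorial : ℝ) * (((d i - a i).factorial : ℝ))))

lemma RHS_eval (r : ℕ) (α : Fin r → ℝ) (x : ℝ) (d : Fin r →₀ ℕ) :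
    MvPowerSeries.coeff d ((∏ i, binomialSeriesMv r (-(α i + 1)) i) *
        expMv r (x • ((1 : MvPowerSeries (Fin r) ℝ) -
          ∏ i, (1 + MvPowerSeries.X i : MvPowerSeries (Fin r) ℝ)⁻¹)))
    = ∑ a ∈ Fintype.piFinset (fun i => Finset.range (d i + 1)),
        ∑ m ∈ Finset.range ((∑ i, d i) + 1), ∑ j ∈ Finset.range (m+1),
          EXPR r α x (fun i => d i) (∑ i, d i) a m j := by
  classical
  set N : ℕ := ∑ i, d i with hNdef
  -- rewrite the inverse factors
  rw [show (∏ i, (1 + MvPowerSeries.X i : MvPowerSeries (Fin r) ℝ)⁻¹)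
      = ∏ i, mk1 r i (fun a => (-1:ℝ)^a) from Finset.prod_congr rfl (fun i _ => inv_one_add_X i)]
  set u : MvPowerSeries (Fin r) ℝ := ∏ i, mk1 r i (fun a => (-1:ℝ)^a) with hu
  have hAmk : (∏ i, binomialSeriesMv r (-(α i + 1)) i)
      = ∏ i, mk1 r i (fun a' => (∏ m ∈ Finset.range a', (-(α i + 1) - (m:ℝ)))
          / (a'.factorial : ℝ)) := rfl
  rw [hAmk, MvPowerSeries.coeff_mul]
  -- constant coefficient facts
  have hu0 : MvPowerSeries.constantCoeff u = 1 := by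
    rw [← MvPowerSeries.coeff_zero_eq_constantCoeff, hu, coeff_prod_mk1]
    simp
  have hconst : MvPowerSeries.constantCoeff
      (x • ((1 : MvPowerSeries (Fin r) ℝ) - u)) = 0 := by
    rw [← MvPowerSeries.coeff_zero_eq_constantCoeff, MvPowerSeries.coeff_smul,
      map_sub, MvPowerSeries.coeff_zero_eq_constantCoeff, map_one, hu0]
    ring
  -- evaluate coeff of expMv at p.2
  have hE : ∀ p : (Fin r →₀ ℕ) × (Fin r →₀ ℕ), p ∈ Finset.HasAntidiagonal.antidiagonal d →
      MvPowerSeries.coeff p.2 (expMv r (x • ((1 : MvPowerSeries (Fin r) ℝ) - u)))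
      = ∑ m ∈ Finset.range (N+1), ∑ j ∈ Finset.range (m+1),
          x^m * ((m.factorial:ℝ))⁻¹ * ((-1:ℝ)^j * ((m.choose j : ℕ) : ℝ))
            * ∏ i, ((-1:ℝ)^(p.2 i) * asc (j:ℝ) (p.2 i) / (((p.2 i).factorial : ℝ))) := by
    intro p hp
    rw [Finset.HasAntidiagonal.mem_antidiagonal] at hp
    have hS : (p.2.sum fun _ e => e) ≤ N := by
      have h1 : (d.sum fun _ e => e) = (p.1.sum fun _ e => e) + (p.2.sum fun _ e => e) := by
        rw [← hp, Finsupp.sum_add_index']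
        · intro a; rfl
        · intro a b1 b2; rfl
      have h2 : (d.sum fun _ e => e) = N := by
        rw [hNdef]
        exact Finsupp.sum_fintype _ _ (fun i => rfl)
      omega
    have hunf : MvPowerSeries.coeff p.2 (expMv r (x • ((1 : MvPowerSeries (Fin r) ℝ) - u)))
        = ∑ m ∈ Finset.range ((p.2.sum fun _ e => e) + 1),
            ((m.factorial : ℝ)⁻¹) * MvPowerSeries.coeff p.2
              ((x • ((1 : MvPowerSeries (Fin r) ℝ) - u)) ^ m) := by
      rw [show MvPowerSeries.coeff p.2 (expMv r (x • ((1 : MvPowerSeries (Fin r) ℝ) - u)))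
          = expMv r (x • ((1 : MvPowerSeries (Fin r) ℝ) - u)) p.2 from rfl]
      rw [expMv, map_sum]
      apply Finset.sum_congr rfl
      intro m _
      rw [MvPowerSeries.coeff_smul]
    rw [hunf]
    rw [Finset.sum_subset (Finset.range_subset_range.2 (by omega : (p.2.sum fun _ e => e) + 1 ≤ N + 1))
      (by
        intro m hm hm'
        simp only [Finset.mem_range] at hm hm'
        rw [coeff_pow_zero_of_lt hconst m p.2 (by omega)]
        ring)]
    apply Finset.sum_congr rfl
    intro m _
    -- expand the m-th power
    have hsub : ((1 : MvPowerSeries (Fin r) ℝ) - u) ^ m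
        = ∑ j ∈ Finset.range (m+1),
            ((-1:ℝ)^j • (u^j * ((m.choose j : ℕ) : MvPowerSeries (Fin r) ℝ))) := by
      rw [sub_eq_neg_add, add_pow]
      apply Finset.sum_congr rfl
      intro j _
      rw [one_pow, ← neg_one_smul ℝ u, smul_pow, mul_one]
      exact smul_mul_assoc _ _ _
    have hcoeffhm : MvPowerSeries.coeff p.2 (((1 : MvPowerSeries (Fin r) ℝ) - u) ^ m)
        = ∑ j ∈ Finset.range (m+1), (-1:ℝ)^j * ((m.choose j : ℕ) : ℝ)
            * ∏ i, ((-1:ℝ)^(p.2 i) * asc (j:ℝ) (p.2 i) / (((p.2 i).factorial : ℝ))) := by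
      rw [hsub, map_sum]
      apply Finset.sum_congr rfl
      intro j _
      rw [MvPowerSeries.coeff_smul, ← map_natCast (MvPowerSeries.C) (m.choose j),
        MvPowerSeries.coeff_mul_C]
      rw [show u ^ j = ∏ i, mk1 r i (fun a' => (-1:ℝ)^a' * asc (j:ℝ) a' / (a'.factorial:ℝ)) from by
        rw [hu, ← Finset.prod_pow]
        exact Finset.prod_congr rfl (fun i _ => u_pow i j)]
      rw [coeff_prod_mk1]
      ring
    rw [smul_pow, MvPowerSeries.coeff_smul, hcoeffhm, Finset.mul_sum, Finset.mul_sum]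
    apply Finset.sum_congr rfl
    intro j _
    ring
  rw [Finset.sum_congr rfl (fun p hp => by
    rw [coeff_prod_mk1, hE p hp])]
  -- convert antidiagonal sum to piFinset sum
  rw [sum_ad_finsupp d (fun af bf =>
    (∏ i, (∏ m ∈ Finset.range (af i), (-(α i + 1) - (m:ℝ))) / ((af i).factorial : ℝ)) *
      (∑ m ∈ Finset.range (N+1), ∑ j ∈ Finset.range (m+1),
        x^m * ((m.factorial:ℝ))⁻¹ * ((-1:ℝ)^j * ((m.choose j : ℕ) : ℝ))
          * ∏ i, ((-1:ℝ)^(bf i) * asc (j:ℝ) (bf i) / (((bf i).factorial : ℝ)))))]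
  apply Finset.sum_congr rfl
  intro a ha
  simp only [Fintype.mem_piFinset, Finset.mem_range] at ha
  rw [Finset.mul_sum]
  apply Finset.sum_congr rfl
  intro m _
  rw [Finset.mul_sum]
  apply Finset.sum_congr rfl
  intro j _
  -- pointwise scalar identity
  have hsplit1 : (∏ i, (∏ m' ∈ Finset.range (a i), (-(α i + 1) - (m':ℝ))) / ((a i).factorial : ℝ))
      = (∏ i, ((-1:ℝ))^(a i)) * ∏ i, (asc (α i + 1) (a i) / ((a i).factorial : ℝ)) := by
    rw [← Finset.prod_mul_distrib]
    apply Finset.prod_congr rfl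
    intro i _
    rw [neg_prod_eq_asc]
    ring
  have hsplit2 : (∏ i, ((-1:ℝ)^(d i - a i) * asc (j:ℝ) (d i - a i) / (((d i - a i).factorial : ℝ))))
      = (∏ i, ((-1:ℝ))^(d i - a i)) * ∏ i, (asc (j:ℝ) (d i - a i) / (((d i - a i).factorial : ℝ))) := by
    rw [← Finset.prod_mul_distrib]
    apply Finset.prod_congr rfl
    intro i _
    ring
  have hsign : (∏ i, ((-1:ℝ))^(a i)) * (∏ i, ((-1:ℝ))^(d i - a i)) = (-1:ℝ)^N := by
    rw [Finset.prod_pow_eq_pow_sum, Finset.prod_pow_eq_pow_sum, ← pow_add]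
    congr 1
    rw [← Finset.sum_add_distrib, hNdef]
    apply Finset.sum_congr rfl
    intro i _
    have := ha i
    omega
  have hfin : (∏ i, (asc (α i + 1) (a i) / ((a i).factorial : ℝ)))
      * (∏ i, (asc (j:ℝ) (d i - a i) / (((d i - a i).factorial : ℝ))))
      = ∏ i, (asc (α i + 1) (a i) * asc (j:ℝ) (d i - a i)
          / (((a i).factorial : ℝ) * (((d i - a i).factorial : ℝ)))) := by
    rw [← Finset.prod_mul_distrib]
    apply Finset.prod_congr rfl
    intro i _
    ring
  rw [EXPR, hsplit1, hsplit2, ← hfin, pow_add, ← hsign]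
  ring

lemma LHS_eval (r : ℕ) (α : Fin r → ℝ) (x : ℝ) (d : Fin r →₀ ℕ) :
    multipleLaguerreVal r α (fun i => d i) x / ∏ i, ((d i).factorial : ℝ)
    = ∑ a ∈ Fintype.piFinset (fun i => Finset.range (d i + 1)),
        ∑ m ∈ Finset.range ((∑ i, d i) + 1), ∑ j ∈ Finset.range (m+1),
          EXPR r α x (fun i => d i) (∑ i, d i) a m j := by
  classical
  set N : ℕ := ∑ i, d i with hNdef
  rw [multipleLaguerreVal, Finset.sum_div]
  -- Step 1 : expand each k-term into a sum over a
  have step1 : ∀ k ∈ Fintype.piFinset (fun i => Finset.range (d i + 1)),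
      ((-1 : ℝ) ^ ((∑ i, d i) - (∑ i, k i)) *
        (∏ i, (((d i).choose (k i) : ℝ) *
          ∏ j ∈ Finset.range (d i - k i),
            (α i + 1 + (∑ j' ∈ Finset.univ.filter (fun j' => j' ≤ i), (k j' : ℝ)) + (j : ℝ)))) *
        x ^ (∑ i, k i)) / (∏ i, ((d i).factorial : ℝ))
      = ∑ a ∈ Fintype.piFinset (fun i => Finset.range (d i + 1)),
          ((-1 : ℝ) ^ (N + (∑ i, k i)) * x ^ (∑ i, k i) *
            ∏ i, (((d i).choose (k i) : ℝ) * (((d i - k i).choose (a i)) : ℝ)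
              * asc (α i + 1) (a i)
              * asc ((∑ j' ∈ Finset.univ.filter (fun j' => j' ≤ i), k j' : ℕ) : ℝ)
                  (d i - k i - a i))) / (∏ i, ((d i).factorial : ℝ)) := by
    intro k hk
    simp only [Fintype.mem_piFinset, Finset.mem_range] at hk
    have hsum_le : (∑ i, k i) ≤ N := by
      rw [hNdef]
      exact Finset.sum_le_sum (fun i _ => by have := hk i; omega)
    rw [neg_one_pow_nat_sub N (∑ i, k i) hsum_le]
    -- rewrite the i-th factor via asc_add
    have hfac : ∀ i : Fin r,
        (((d i).choose (k i) : ℝ) *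
          ∏ j ∈ Finset.range (d i - k i),
            (α i + 1 + (∑ j' ∈ Finset.univ.filter (fun j' => j' ≤ i), (k j' : ℝ)) + (j : ℝ)))
        = ∑ t ∈ Finset.range (d i - k i + 1),
            (((d i).choose (k i) : ℝ) * (((d i - k i).choose t) : ℝ)
              * asc (α i + 1) t
              * asc ((∑ j' ∈ Finset.univ.filter (fun j' => j' ≤ i), k j' : ℕ) : ℝ)
                  (d i - k i - t)) := by
      intro i
      rw [show (∑ j' ∈ Finset.univ.filter (fun j' => j' ≤ i), (k j' : ℝ))
          = ((∑ j' ∈ Finset.univ.filter (fun j' => j' ≤ i), k j' : ℕ) : ℝ) from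
          (Nat.cast_sum _ _).symm]
      rw [show (∏ j ∈ Finset.range (d i - k i),
            (α i + 1 + ((∑ j' ∈ Finset.univ.filter (fun j' => j' ≤ i), k j' : ℕ) : ℝ) + (j : ℝ)))
          = asc (α i + 1 + ((∑ j' ∈ Finset.univ.filter (fun j' => j' ≤ i), k j' : ℕ) : ℝ))
              (d i - k i) from rfl]
      rw [asc_add, Finset.mul_sum]
      apply Finset.sum_congr rfl
      intro t _
      ring
    rw [Finset.prod_congr rfl (fun i _ => hfac i), Finset.prod_univ_sum]
    rw [Finset.sum_subset (Fintype.piFinset_subset _ _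
        (fun i => Finset.range_subset_range.2 (by omega : d i - k i + 1 ≤ d i + 1)))
      (by
        intro a ha ha'
        simp only [Fintype.mem_piFinset, Finset.mem_range] at ha ha'
        push_neg at ha'
        obtain ⟨i, hi⟩ := ha'
        apply Finset.prod_eq_zero (Finset.mem_univ i)
        rw [Nat.choose_eq_zero_of_lt (show d i - k i < a i by omega)]
        ring)]
    rw [Finset.mul_sum, Finset.sum_mul, Finset.sum_div]
    apply Finset.sum_congr rfl
    intro t _
    ring
  rw [Finset.sum_congr rfl step1, Finset.sum_comm]
  -- Step 2 : for each a, evaluate the inner k-sum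
  apply Finset.sum_congr rfl
  intro a ha
  simp only [Fintype.mem_piFinset, Finset.mem_range] at ha
  -- 2a : rearrange each term with the trinomial identity
  have h2a : ∀ k ∈ Fintype.piFinset (fun i => Finset.range (d i + 1)),
      ((-1 : ℝ) ^ (N + (∑ i, k i)) * x ^ (∑ i, k i) *
        ∏ i, (((d i).choose (k i) : ℝ) * (((d i - k i).choose (a i)) : ℝ)
          * asc (α i + 1) (a i)
          * asc ((∑ j' ∈ Finset.univ.filter (fun j' => j' ≤ i), k j' : ℕ) : ℝ)
              (d i - k i - a i))) / (∏ i, ((d i).factorial : ℝ))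
      = ((-1:ℝ)^N / (∏ i, ((d i).factorial : ℝ))
          * ∏ i, (((d i).choose (a i) : ℝ) * asc (α i + 1) (a i)))
        * ((-1:ℝ)^(∑ i, k i) * x ^ (∑ i, k i) *
            ∏ i, ((((d i - a i).choose (k i)) : ℝ)
              * asc ((∑ j' ∈ Finset.univ.filter (fun j' => j' ≤ i), k j' : ℕ) : ℝ)
                  (d i - a i - k i))) := by
    intro k hk
    have hfac2 : ∀ i : Fin r,
        (((d i).choose (k i) : ℝ) * (((d i - k i).choose (a i)) : ℝ)
          * asc (α i + 1) (a i)
          * asc ((∑ j' ∈ Finset.univ.filter (fun j' => j' ≤ i), k j' : ℕ) : ℝ)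
              (d i - k i - a i))
        = (((d i).choose (a i) : ℝ) * asc (α i + 1) (a i))
          * ((((d i - a i).choose (k i)) : ℝ)
              * asc ((∑ j' ∈ Finset.univ.filter (fun j' => j' ≤ i), k j' : ℕ) : ℝ)
                  (d i - a i - k i)) := by
      intro i
      rw [show d i - k i - a i = d i - a i - k i by omega]
      have htri := trinomialR (d i) (k i) (a i)
      linear_combination (asc (α i + 1) (a i)
        * asc ((∑ j' ∈ Finset.univ.filter (fun j' => j' ≤ i), k j' : ℕ) : ℝ)
            (d i - a i - k i)) * htri
    rw [Finset.prod_congr rfl (fun i _ => hfac2 i), Finset.prod_mul_distrib, pow_add]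
    ring
  rw [Finset.sum_congr rfl h2a, ← Finset.mul_sum]
  -- 2b : shrink the k-range
  have hshrink : (∑ k ∈ Fintype.piFinset (fun i => Finset.range (d i + 1)),
        ((-1:ℝ)^(∑ i, k i) * x ^ (∑ i, k i) *
            ∏ i, ((((d i - a i).choose (k i)) : ℝ)
              * asc ((∑ j' ∈ Finset.univ.filter (fun j' => j' ≤ i), k j' : ℕ) : ℝ)
                  (d i - a i - k i))))
      = ∑ k ∈ Fintype.piFinset (fun i => Finset.range (d i - a i + 1)),
        ((-1:ℝ)^(∑ i, k i) * x ^ (∑ i, k i) *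
            ∏ i, ((((d i - a i).choose (k i)) : ℝ)
              * asc ((∑ j' ∈ Finset.univ.filter (fun j' => j' ≤ i), k j' : ℕ) : ℝ)
                  (d i - a i - k i))) := by
    symm
    apply Finset.sum_subset (Fintype.piFinset_subset _ _
        (fun i => Finset.range_subset_range.2 (by omega : d i - a i + 1 ≤ d i + 1)))
    intro k hkmem hk'
    simp only [Fintype.mem_piFinset, Finset.mem_range] at hkmem hk'
    push_neg at hk'
    obtain ⟨i, hi⟩ := hk'
    have hlt : d i - a i < k i := by omega
    have hzero : (((d i - a i).choose (k i)) : ℝ) = 0 := by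
      rw [Nat.choose_eq_zero_of_lt hlt, Nat.cast_zero]
    apply mul_eq_zero_of_right
    exact Finset.prod_eq_zero (Finset.mem_univ i) (by rw [hzero]; ring)
  rw [hshrink]
  -- 2c : group the k-sum by total degree m
  have hgroup : (∑ k ∈ Fintype.piFinset (fun i => Finset.range (d i - a i + 1)),
        ((-1:ℝ)^(∑ i, k i) * x ^ (∑ i, k i) *
            ∏ i, ((((d i - a i).choose (k i)) : ℝ)
              * asc ((∑ j' ∈ Finset.univ.filter (fun j' => j' ≤ i), k j' : ℕ) : ℝ)
                  (d i - a i - k i))))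
      = ∑ m ∈ Finset.range (N + 1), (-1:ℝ)^m * x^m *
          (∑ k ∈ Fintype.piFinset (fun i => Finset.range (d i - a i + 1)),
            if (∑ i, k i) = m
            then ∏ i, ((((d i - a i).choose (k i)) : ℝ)
              * asc ((0 + ∑ j' ∈ Finset.univ.filter (fun j' => j' ≤ i), k j' : ℕ) : ℝ)
                  (d i - a i - k i))
            else 0) := by
    have hin : ∀ k ∈ Fintype.piFinset (fun i => Finset.range (d i - a i + 1)),
        ((-1:ℝ)^(∑ i, k i) * x ^ (∑ i, k i) *
            ∏ i, ((((d i - a i).choose (k i)) : ℝ)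
              * asc ((∑ j' ∈ Finset.univ.filter (fun j' => j' ≤ i), k j' : ℕ) : ℝ)
                  (d i - a i - k i)))
        = ∑ m ∈ Finset.range (N+1), if (∑ i, k i) = m
            then ((-1:ℝ)^(∑ i, k i) * x ^ (∑ i, k i) *
              ∏ i, ((((d i - a i).choose (k i)) : ℝ)
                * asc ((∑ j' ∈ Finset.univ.filter (fun j' => j' ≤ i), k j' : ℕ) : ℝ)
                    (d i - a i - k i)))
            else 0 := by
      intro k hkmem
      simp only [Fintype.mem_piFinset, Finset.mem_range] at hkmem
      have hle : (∑ i, k i) ≤ N := by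
        rw [hNdef]
        apply Finset.sum_le_sum
        intro i _
        have := hkmem i
        omega
      rw [Finset.sum_ite_eq (Finset.range (N+1)) (∑ i, k i), if_pos (Finset.mem_range.2 (by omega))]
    rw [Finset.sum_congr rfl hin, Finset.sum_comm]
    apply Finset.sum_congr rfl
    intro m _
    rw [Finset.mul_sum]
    apply Finset.sum_congr rfl
    intro k _
    by_cases h : (∑ i, k i) = m
    · rw [if_pos h, if_pos h, h]
      simp only [Nat.zero_add]
    · rw [if_neg h, if_neg h, mul_zero]
  rw [hgroup]
  -- 2d : apply the bridge and the closed form of Tsum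
  have hfactne : ∀ m : ℕ, ((m.factorial : ℝ)) ≠ 0 :=
    fun m => Nat.cast_ne_zero.2 (Nat.factorial_pos m).ne'
  have hTs : ∀ m : ℕ, (∑ k ∈ Fintype.piFinset (fun i => Finset.range (d i - a i + 1)),
        if (∑ i, k i) = m
        then ∏ i, ((((d i - a i).choose (k i)) : ℝ)
          * asc ((0 + ∑ j' ∈ Finset.univ.filter (fun j' => j' ≤ i), k j' : ℕ) : ℝ)
              (d i - a i - k i))
        else 0)
      = ((m.factorial:ℝ))⁻¹ * ∑ j ∈ Finset.range (m+1),
          (-1:ℝ)^(m+j) * (m.choose j) * ∏ i, asc ((j:ℝ)) (d i - a i) := by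
    intro m
    rw [bridge r (fun i => d i - a i) 0 m]
    have h := Tsum_closed (List.ofFn (fun i => d i - a i)) 0 m
    have hl : ∀ j : ℕ,
        ((List.ofFn (fun i => d i - a i)).map (fun c => asc ((0+j : ℕ) : ℝ) c)).prod
        = ∏ i, asc ((j:ℝ)) (d i - a i) := by
      intro j
      rw [List.map_ofFn, List.prod_ofFn]
      apply Finset.prod_congr rfl
      intro i _
      simp [Function.comp]
    rw [Finset.sum_congr rfl (fun j _ => by rw [hl j])] at h
    rw [← h, inv_mul_cancel_left₀ (hfactne m)]
  rw [Finset.sum_congr rfl (fun m _ => by rw [hTs m]), Finset.mul_sum]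
  apply Finset.sum_congr rfl
  intro m hm
  rw [Finset.mul_sum, Finset.mul_sum, Finset.mul_sum]
  apply Finset.sum_congr rfl
  intro j hj
  -- final scalar identity
  have hP : (∏ i, (((d i).choose (a i)) : ℝ) * asc (α i + 1) (a i))
      * (∏ i, asc ((j:ℝ)) (d i - a i)) / (∏ i, ((d i).factorial : ℝ))
      = ∏ i, (asc (α i + 1) (a i) * asc (j:ℝ) (d i - a i)
          / (((a i).factorial : ℝ) * (((d i - a i).factorial : ℝ)))) := by
    rw [← Finset.prod_mul_distrib, ← Finset.prod_div_distrib]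
    apply Finset.prod_congr rfl
    intro i _
    have h1 := Nat.choose_mul_factorial_mul_factorial (show a i ≤ d i by have := ha i; omega)
    have h2 : (((d i).choose (a i)) : ℝ) * ((a i).factorial : ℝ)
        * (((d i - a i).factorial) : ℝ) = ((d i).factorial : ℝ) := by
      exact_mod_cast congrArg (Nat.cast (R := ℝ)) h1
    rw [div_eq_div_iff (hfactne (d i)) (by positivity)]
    linear_combination (asc (α i + 1) (a i) * asc ((j:ℝ)) (d i - a i)) * h2
  have hsgn : (-1:ℝ)^m * (-1:ℝ)^(m+j) = (-1:ℝ)^j := by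
    rw [← pow_add, show m + (m+j) = 2*m + j by omega]
    rw [pow_add, pow_mul]
    norm_num
  rw [EXPR]
  rw [div_eq_mul_inv] at hP ⊢
  rw [← hP]
  rw [show (-1:ℝ)^(N+j) = (-1:ℝ)^N * ((-1:ℝ)^m * (-1:ℝ)^(m+j)) from by rw [hsgn, pow_add]]
  ring

/-- the multivariate exponential generating function identity
`Σ_{n_1,...,n_r ≥ 0} L_n^{(α)}(x) t_1^{n_1}/n_1! ··· t_r^{n_r}/n_r!
  = (Π_i (1+t_i)^{-(α_i+1)}) · exp[x (1 - Π_i 1/(1+t_i))]`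
as formal power series in `t_1, ..., t_r`. -/
theorem multipleLaguerre_egf (r : ℕ) (α : Fin r → ℝ) (x : ℝ) :
    ((fun d => multipleLaguerreVal r α (fun i => d i) x / ∏ i, ((d i).factorial : ℝ)) :
        MvPowerSeries (Fin r) ℝ)
      = (∏ i, binomialSeriesMv r (-(α i + 1)) i) *
        expMv r (x • ((1 : MvPowerSeries (Fin r) ℝ) -
          ∏ i, (1 + MvPowerSeries.X i : MvPowerSeries (Fin r) ℝ)⁻¹)) := by
  funext d
  exact (LHS_eval r α x d).trans (RHS_eval r α x d).symm
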